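/- Let G̃ be a unitary H_N ⊗ H_N → H_M ⊗ H_N satisfying the mixed pentagon equation Ŵ₁₂ G̃₁₃ G̃₂₃ = G̃₂₃ G̃₁₂ with a multiplicative unitary Ŵ, and suppose Ŵ*(Jδ^{it}J ⊗ 1)Ŵ = Jδ^{it}J ⊗ δ^{it} for a one-parameter family of unitaries δ^{it}. Define H^{it} := G̃*(Jδ^{it}J ⊗ 1)G̃ and suppose H^{it} = h^{it} ⊗ k^{it} for one-parameter unitary groups h^{it}, k^{it}. Then, setting α^op(x) := G̃(x ⊗ 1)G̃*, one has (ι ⊗ α^op)(H^{it}) = h^{it} ⊗ δ^{it} ⊗ k^{it}. -/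
import Mathlib

open TensorProduct

noncomputable section

variable {A B C D : Type*}
  [AddCommGroup A] [Module ℂ A] [AddCommGroup B] [Module ℂ B]
  [AddCommGroup C] [Module ℂ C] [AddCommGroup D] [Module ℂ D]

/-- Place an operator `f : A ⊗ B → C ⊗ D` on legs 1 and 2, bystander `E` on leg 3. -/
def leg12 (f : A ⊗[ℂ] B →ₗ[ℂ] C ⊗[ℂ] D) (E : Type*) [AddCommGroup E] [Module ℂ E] :
    A ⊗[ℂ] (B ⊗[ℂ] E) →ₗ[ℂ] C ⊗[ℂ] (D ⊗[ℂ] E) :=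
  (TensorProduct.assoc ℂ C D E).toLinearMap ∘ₗ
    (TensorProduct.map f LinearMap.id) ∘ₗ (TensorProduct.assoc ℂ A B E).symm.toLinearMap

/-- Place an operator `f : A ⊗ B → C ⊗ D` on legs 1 and 3, bystander `E` on leg 2. -/
def leg13 (f : A ⊗[ℂ] B →ₗ[ℂ] C ⊗[ℂ] D) (E : Type*) [AddCommGroup E] [Module ℂ E] :
    A ⊗[ℂ] (E ⊗[ℂ] B) →ₗ[ℂ] C ⊗[ℂ] (E ⊗[ℂ] D) :=
  (LinearMap.lTensor C (TensorProduct.comm ℂ D E).toLinearMap) ∘ₗ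
    leg12 f E ∘ₗ (LinearMap.lTensor A (TensorProduct.comm ℂ E B).toLinearMap)

lemma lTensor_eq_map (M : Type*) [AddCommGroup M] [Module ℂ M] (f : A →ₗ[ℂ] B) :
    LinearMap.lTensor M f = TensorProduct.map LinearMap.id f := rfl

lemma leg12_id (E : Type*) [AddCommGroup E] [Module ℂ E] :
    leg12 (LinearMap.id : A ⊗[ℂ] B →ₗ[ℂ] A ⊗[ℂ] B) E = LinearMap.id := by
  apply LinearMap.ext; intro x
  simp [leg12, TensorProduct.map_id]

lemma leg12_comp {A' B' : Type*} [AddCommGroup A'] [Module ℂ A'] [AddCommGroup B'] [Module ℂ B']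
    (f : A' ⊗[ℂ] B' →ₗ[ℂ] C ⊗[ℂ] D) (g : A ⊗[ℂ] B →ₗ[ℂ] A' ⊗[ℂ] B')
    (E : Type*) [AddCommGroup E] [Module ℂ E] :
    leg12 f E ∘ₗ leg12 g E = leg12 (f ∘ₗ g) E := by
  apply LinearMap.ext; intro x
  simp only [leg12, LinearMap.comp_apply, LinearEquiv.coe_coe, LinearEquiv.symm_apply_apply]
  rw [← LinearMap.comp_apply (TensorProduct.map f LinearMap.id), ← TensorProduct.map_comp]
  simp

lemma leg12_map (f : A →ₗ[ℂ] C) (g : B →ₗ[ℂ] D) (E : Type*) [AddCommGroup E] [Module ℂ E] :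
    leg12 (TensorProduct.map f g) E
      = TensorProduct.map f (TensorProduct.map g (LinearMap.id : E →ₗ[ℂ] E)) := by
  ext a b e
  simp [leg12]

lemma leg13_id (E : Type*) [AddCommGroup E] [Module ℂ E] :
    leg13 (LinearMap.id : A ⊗[ℂ] B →ₗ[ℂ] A ⊗[ℂ] B) E = LinearMap.id := by
  ext a e b
  simp [leg13, leg12]

lemma leg13_comp {A' B' : Type*} [AddCommGroup A'] [Module ℂ A'] [AddCommGroup B'] [Module ℂ B']
    (f : A' ⊗[ℂ] B' →ₗ[ℂ] C ⊗[ℂ] D) (g : A ⊗[ℂ] B →ₗ[ℂ] A' ⊗[ℂ] B')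
    (E : Type*) [AddCommGroup E] [Module ℂ E] :
    leg13 f E ∘ₗ leg13 g E = leg13 (f ∘ₗ g) E := by
  have hcc : (TensorProduct.comm ℂ E B').toLinearMap ∘ₗ (TensorProduct.comm ℂ B' E).toLinearMap
      = LinearMap.id := by ext x y; simp
  apply LinearMap.ext; intro x
  simp only [leg13, LinearMap.comp_apply]
  rw [← LinearMap.comp_apply (LinearMap.lTensor A' (TensorProduct.comm ℂ E B').toLinearMap),
    ← LinearMap.lTensor_comp, hcc, LinearMap.lTensor_id, LinearMap.id_apply,
    ← LinearMap.comp_apply (leg12 f E), leg12_comp]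

lemma leg13_map (f : A →ₗ[ℂ] C) (g : B →ₗ[ℂ] D) (E : Type*) [AddCommGroup E] [Module ℂ E] :
    leg13 (TensorProduct.map f g) E
      = TensorProduct.map f (TensorProduct.map (LinearMap.id : E →ₗ[ℂ] E) g) := by
  ext a e b
  simp [leg13, leg12]

lemma leg12_bystander (f : A ⊗[ℂ] B →ₗ[ℂ] C ⊗[ℂ] D) {E : Type*} [AddCommGroup E] [Module ℂ E]
    (g : E →ₗ[ℂ] E) :
    leg12 f E ∘ₗ LinearMap.lTensor A (TensorProduct.map (LinearMap.id : B →ₗ[ℂ] B) g)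
      = LinearMap.lTensor C (TensorProduct.map (LinearMap.id : D →ₗ[ℂ] D) g) ∘ₗ leg12 f E := by
  have hsa : (TensorProduct.assoc ℂ A B E).symm.toLinearMap
        ∘ₗ LinearMap.lTensor A (TensorProduct.map (LinearMap.id : B →ₗ[ℂ] B) g)
      = TensorProduct.map (LinearMap.id : A ⊗[ℂ] B →ₗ[ℂ] A ⊗[ℂ] B) g
        ∘ₗ (TensorProduct.assoc ℂ A B E).symm.toLinearMap := by ext a b e; simp
  have hsc : (TensorProduct.assoc ℂ C D E).toLinearMap
        ∘ₗ TensorProduct.map (LinearMap.id : C ⊗[ℂ] D →ₗ[ℂ] C ⊗[ℂ] D) g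
      = LinearMap.lTensor C (TensorProduct.map (LinearMap.id : D →ₗ[ℂ] D) g)
        ∘ₗ (TensorProduct.assoc ℂ C D E).toLinearMap := by ext c d e; simp
  have hsb : TensorProduct.map f (LinearMap.id : E →ₗ[ℂ] E)
        ∘ₗ TensorProduct.map (LinearMap.id : A ⊗[ℂ] B →ₗ[ℂ] A ⊗[ℂ] B) g
      = TensorProduct.map (LinearMap.id : C ⊗[ℂ] D →ₗ[ℂ] C ⊗[ℂ] D) g
        ∘ₗ TensorProduct.map f (LinearMap.id : E →ₗ[ℂ] E) := by
    rw [← TensorProduct.map_comp, ← TensorProduct.map_comp]; simp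
  apply LinearMap.ext; intro x
  have ha := LinearMap.congr_fun hsa x
  simp only [LinearMap.comp_apply, LinearEquiv.coe_coe] at ha
  simp only [leg12, LinearMap.comp_apply, LinearEquiv.coe_coe]
  rw [ha]
  have hb := LinearMap.congr_fun hsb ((TensorProduct.assoc ℂ A B E).symm x)
  simp only [LinearMap.comp_apply] at hb
  rw [hb]
  have hc := LinearMap.congr_fun hsc ((TensorProduct.map f LinearMap.id)
    ((TensorProduct.assoc ℂ A B E).symm x))
  simp only [LinearMap.comp_apply, LinearEquiv.coe_coe] at hc
  rw [hc]

lemma leg13_bystander (f : A ⊗[ℂ] B →ₗ[ℂ] C ⊗[ℂ] D) {E : Type*} [AddCommGroup E] [Module ℂ E]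
    (g : E →ₗ[ℂ] E) :
    leg13 f E ∘ₗ LinearMap.lTensor A (TensorProduct.map g (LinearMap.id : B →ₗ[ℂ] B))
      = LinearMap.lTensor C (TensorProduct.map g (LinearMap.id : D →ₗ[ℂ] D)) ∘ₗ leg13 f E := by
  have h1 : (TensorProduct.comm ℂ E B).toLinearMap
        ∘ₗ TensorProduct.map g (LinearMap.id : B →ₗ[ℂ] B)
      = TensorProduct.map (LinearMap.id : B →ₗ[ℂ] B) g ∘ₗ (TensorProduct.comm ℂ E B).toLinearMap
      := by ext e b; simp
  have h2 : (TensorProduct.comm ℂ D E).toLinearMap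
        ∘ₗ TensorProduct.map (LinearMap.id : D →ₗ[ℂ] D) g
      = TensorProduct.map g (LinearMap.id : D →ₗ[ℂ] D) ∘ₗ (TensorProduct.comm ℂ D E).toLinearMap
      := by ext d e; simp
  calc leg13 f E ∘ₗ LinearMap.lTensor A (TensorProduct.map g LinearMap.id)
      = (LinearMap.lTensor C (TensorProduct.comm ℂ D E).toLinearMap) ∘ₗ leg12 f E
          ∘ₗ (LinearMap.lTensor A ((TensorProduct.comm ℂ E B).toLinearMap
            ∘ₗ TensorProduct.map g LinearMap.id)) := by
        simp only [leg13, LinearMap.lTensor_comp, LinearMap.comp_assoc]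
    _ = (LinearMap.lTensor C (TensorProduct.comm ℂ D E).toLinearMap)
          ∘ₗ (leg12 f E ∘ₗ LinearMap.lTensor A (TensorProduct.map LinearMap.id g))
          ∘ₗ (LinearMap.lTensor A (TensorProduct.comm ℂ E B).toLinearMap) := by
        rw [h1, LinearMap.lTensor_comp]; simp only [LinearMap.comp_assoc]
    _ = (LinearMap.lTensor C ((TensorProduct.comm ℂ D E).toLinearMap
          ∘ₗ TensorProduct.map LinearMap.id g)) ∘ₗ leg12 f E
          ∘ₗ (LinearMap.lTensor A (TensorProduct.comm ℂ E B).toLinearMap) := by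
        rw [leg12_bystander f g, LinearMap.lTensor_comp]; simp only [LinearMap.comp_assoc]
    _ = LinearMap.lTensor C (TensorProduct.map g LinearMap.id) ∘ₗ leg13 f E := by
        rw [h2, LinearMap.lTensor_comp]; simp only [leg13, LinearMap.comp_assoc]

/-- Let `G̃ : H_N ⊗ H_N → H_M ⊗ H_N` be a unitary satisfying the mixed
pentagon equation `Ŵ₁₂ G̃₁₃ G̃₂₃ = G̃₂₃ G̃₁₂` with a multiplicative unitary `Ŵ`, and
suppose `Ŵ*(Jδ^{it}J ⊗ 1)Ŵ = Jδ^{it}J ⊗ δ^{it}`.  Define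
`H^{it} := G̃*(Jδ^{it}J ⊗ 1)G̃` and assume `H^{it} = h^{it} ⊗ k^{it}`.
Then with `α^op(x) := G̃(x ⊗ 1)G̃*`, one has
`(ι ⊗ α^op)(H^{it}) = h^{it} ⊗ δ^{it} ⊗ k^{it}`. -/
theorem iota_alpha_of_Hit {Hm Hn : Type*}
    [AddCommGroup Hm] [Module ℂ Hm] [AddCommGroup Hn] [Module ℂ Hn]
    (What Whatstar : Hm ⊗[ℂ] Hm →ₗ[ℂ] Hm ⊗[ℂ] Hm)
    (hW1 : What ∘ₗ Whatstar = LinearMap.id) (hW2 : Whatstar ∘ₗ What = LinearMap.id)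
    (hWpent : leg12 What Hm ∘ₗ leg13 What Hm ∘ₗ LinearMap.lTensor Hm What
      = LinearMap.lTensor Hm What ∘ₗ leg12 What Hm)
    (G : Hn ⊗[ℂ] Hn →ₗ[ℂ] Hm ⊗[ℂ] Hn) (Gstar : Hm ⊗[ℂ] Hn →ₗ[ℂ] Hn ⊗[ℂ] Hn)
    (hG1 : G ∘ₗ Gstar = LinearMap.id) (hG2 : Gstar ∘ₗ G = LinearMap.id)
    (hmixedpent : leg12 What Hn ∘ₗ leg13 G Hm ∘ₗ LinearMap.lTensor Hn G
      = LinearMap.lTensor Hm G ∘ₗ leg12 G Hn)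
    (D JD : ℝ → (Hm →ₗ[ℂ] Hm)) (h k : ℝ → (Hn →ₗ[ℂ] Hn))
    (hDgrp : ∀ s t : ℝ, D (s + t) = D s ∘ₗ D t) (hD0 : D 0 = LinearMap.id)
    (hJDgrp : ∀ s t : ℝ, JD (s + t) = JD s ∘ₗ JD t) (hJD0 : JD 0 = LinearMap.id)
    (hhgrp : ∀ s t : ℝ, h (s + t) = h s ∘ₗ h t) (hh0 : h 0 = LinearMap.id)
    (hkgrp : ∀ s t : ℝ, k (s + t) = k s ∘ₗ k t) (hk0 : k 0 = LinearMap.id)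
    (hWconj : ∀ t : ℝ,
      Whatstar ∘ₗ TensorProduct.map (JD t) LinearMap.id ∘ₗ What
        = TensorProduct.map (JD t) (D t))
    (hHit : ∀ t : ℝ,
      Gstar ∘ₗ TensorProduct.map (JD t) LinearMap.id ∘ₗ G
        = TensorProduct.map (h t) (k t)) :
    ∀ t : ℝ,
      LinearMap.lTensor Hn G ∘ₗ leg12 (TensorProduct.map (h t) (k t)) Hn ∘ₗ
          LinearMap.lTensor Hn Gstar
        = TensorProduct.map (h t) (TensorProduct.map (D t) (k t)) := by
  intro t
  -- JD t ⊗ 1 moves through G and What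
  have hXG : TensorProduct.map (JD t) LinearMap.id ∘ₗ G
      = G ∘ₗ TensorProduct.map (h t) (k t) := by
    have e : G ∘ₗ (Gstar ∘ₗ TensorProduct.map (JD t) LinearMap.id ∘ₗ G)
        = TensorProduct.map (JD t) LinearMap.id ∘ₗ G := by
      simp only [← LinearMap.comp_assoc]
      rw [hG1, LinearMap.id_comp]
    rw [hHit t] at e; exact e.symm
  have hXW : TensorProduct.map (JD t) LinearMap.id ∘ₗ What
      = What ∘ₗ TensorProduct.map (JD t) (D t) := by
    have e : What ∘ₗ (Whatstar ∘ₗ TensorProduct.map (JD t) LinearMap.id ∘ₗ What)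
        = TensorProduct.map (JD t) LinearMap.id ∘ₗ What := by
      simp only [← LinearMap.comp_assoc]
      rw [hW1, LinearMap.id_comp]
    rw [hWconj t] at e; exact e.symm
  -- step s1 : X1 ∘ W12 = W12 ∘ (JD ⊗ D ⊗ 1)
  have s1 : TensorProduct.map (JD t) (LinearMap.id : Hm ⊗[ℂ] Hn →ₗ[ℂ] Hm ⊗[ℂ] Hn)
        ∘ₗ leg12 What Hn
      = leg12 What Hn
        ∘ₗ TensorProduct.map (JD t) (TensorProduct.map (D t) LinearMap.id) := by
    rw [show TensorProduct.map (JD t) (LinearMap.id : Hm ⊗[ℂ] Hn →ₗ[ℂ] Hm ⊗[ℂ] Hn)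
        = leg12 (TensorProduct.map (JD t) (LinearMap.id : Hm →ₗ[ℂ] Hm)) Hn from by
      rw [leg12_map, TensorProduct.map_id]]
    rw [leg12_comp, hXW, ← leg12_comp, leg12_map]
  have s2 : TensorProduct.map (JD t) (TensorProduct.map (D t) LinearMap.id)
      = TensorProduct.map (JD t) (LinearMap.id : Hm ⊗[ℂ] Hn →ₗ[ℂ] Hm ⊗[ℂ] Hn)
        ∘ₗ TensorProduct.map (LinearMap.id : Hm →ₗ[ℂ] Hm)
          (TensorProduct.map (D t) LinearMap.id) := by
    rw [← TensorProduct.map_comp]; simp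
  have s3 : TensorProduct.map (JD t) (LinearMap.id : Hm ⊗[ℂ] Hn →ₗ[ℂ] Hm ⊗[ℂ] Hn)
        ∘ₗ leg13 G Hm
      = leg13 G Hm ∘ₗ TensorProduct.map (h t) (TensorProduct.map LinearMap.id (k t)) := by
    rw [show TensorProduct.map (JD t) (LinearMap.id : Hm ⊗[ℂ] Hn →ₗ[ℂ] Hm ⊗[ℂ] Hn)
        = leg13 (TensorProduct.map (JD t) (LinearMap.id : Hn →ₗ[ℂ] Hn)) Hm from by
      rw [leg13_map, TensorProduct.map_id]]
    rw [leg13_comp, hXG, ← leg13_comp, leg13_map]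
  have s4 : TensorProduct.map (LinearMap.id : Hm →ₗ[ℂ] Hm)
          (TensorProduct.map (D t) LinearMap.id) ∘ₗ leg13 G Hm
      = leg13 G Hm ∘ₗ TensorProduct.map (LinearMap.id : Hn →ₗ[ℂ] Hn)
          (TensorProduct.map (D t) LinearMap.id) :=
    (leg13_bystander G (D t)).symm
  -- M1
  have M1 : TensorProduct.map (JD t) (LinearMap.id : Hm ⊗[ℂ] Hn →ₗ[ℂ] Hm ⊗[ℂ] Hn)
        ∘ₗ (leg12 What Hn ∘ₗ leg13 G Hm ∘ₗ LinearMap.lTensor Hn G)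
      = leg12 What Hn ∘ₗ leg13 G Hm
        ∘ₗ TensorProduct.map (h t) (TensorProduct.map (D t) (k t) ∘ₗ G) := by
    calc TensorProduct.map (JD t) (LinearMap.id : Hm ⊗[ℂ] Hn →ₗ[ℂ] Hm ⊗[ℂ] Hn)
          ∘ₗ (leg12 What Hn ∘ₗ leg13 G Hm ∘ₗ LinearMap.lTensor Hn G)
        = (TensorProduct.map (JD t) LinearMap.id ∘ₗ leg12 What Hn)
            ∘ₗ leg13 G Hm ∘ₗ LinearMap.lTensor Hn G := by
          simp only [LinearMap.comp_assoc]
      _ = (leg12 What Hn ∘ₗ (TensorProduct.map (JD t) LinearMap.id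
            ∘ₗ TensorProduct.map LinearMap.id (TensorProduct.map (D t) LinearMap.id)))
            ∘ₗ leg13 G Hm ∘ₗ LinearMap.lTensor Hn G := by
          rw [s1, s2]
      _ = leg12 What Hn ∘ₗ TensorProduct.map (JD t) LinearMap.id
            ∘ₗ (TensorProduct.map LinearMap.id (TensorProduct.map (D t) LinearMap.id)
              ∘ₗ leg13 G Hm) ∘ₗ LinearMap.lTensor Hn G := by
          simp only [LinearMap.comp_assoc]
      _ = leg12 What Hn ∘ₗ (TensorProduct.map (JD t) LinearMap.id ∘ₗ leg13 G Hm)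
            ∘ₗ TensorProduct.map LinearMap.id (TensorProduct.map (D t) LinearMap.id)
            ∘ₗ LinearMap.lTensor Hn G := by
          rw [s4]; simp only [LinearMap.comp_assoc]
      _ = leg12 What Hn ∘ₗ leg13 G Hm
            ∘ₗ TensorProduct.map (h t) (TensorProduct.map LinearMap.id (k t))
            ∘ₗ TensorProduct.map LinearMap.id (TensorProduct.map (D t) LinearMap.id)
            ∘ₗ LinearMap.lTensor Hn G := by
          rw [s3]; simp only [LinearMap.comp_assoc]
      _ = leg12 What Hn ∘ₗ leg13 G Hm
            ∘ₗ TensorProduct.map (h t) (TensorProduct.map (D t) (k t) ∘ₗ G) := by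
          congr 2
          simp only [lTensor_eq_map, ← LinearMap.comp_assoc, ← TensorProduct.map_comp,
            LinearMap.id_comp, LinearMap.comp_id]
  -- M2
  have s6 : TensorProduct.map (JD t) (LinearMap.id : Hm ⊗[ℂ] Hn →ₗ[ℂ] Hm ⊗[ℂ] Hn)
        ∘ₗ LinearMap.lTensor Hm G
      = LinearMap.lTensor Hm G
        ∘ₗ TensorProduct.map (JD t) (LinearMap.id : Hn ⊗[ℂ] Hn →ₗ[ℂ] Hn ⊗[ℂ] Hn) := by
    simp only [lTensor_eq_map, ← TensorProduct.map_comp, LinearMap.id_comp, LinearMap.comp_id]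
  have s7 : TensorProduct.map (JD t) (LinearMap.id : Hn ⊗[ℂ] Hn →ₗ[ℂ] Hn ⊗[ℂ] Hn)
        ∘ₗ leg12 G Hn
      = leg12 G Hn ∘ₗ TensorProduct.map (h t) (TensorProduct.map (k t) LinearMap.id) := by
    rw [show TensorProduct.map (JD t) (LinearMap.id : Hn ⊗[ℂ] Hn →ₗ[ℂ] Hn ⊗[ℂ] Hn)
        = leg12 (TensorProduct.map (JD t) (LinearMap.id : Hn →ₗ[ℂ] Hn)) Hn from by
      rw [leg12_map, TensorProduct.map_id]]
    rw [leg12_comp, hXG, ← leg12_comp, leg12_map]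
  have M2 : TensorProduct.map (JD t) (LinearMap.id : Hm ⊗[ℂ] Hn →ₗ[ℂ] Hm ⊗[ℂ] Hn)
        ∘ₗ (LinearMap.lTensor Hm G ∘ₗ leg12 G Hn)
      = leg12 What Hn ∘ₗ leg13 G Hm
        ∘ₗ TensorProduct.map (h t) (G ∘ₗ TensorProduct.map (k t) LinearMap.id) := by
    calc TensorProduct.map (JD t) (LinearMap.id : Hm ⊗[ℂ] Hn →ₗ[ℂ] Hm ⊗[ℂ] Hn)
          ∘ₗ (LinearMap.lTensor Hm G ∘ₗ leg12 G Hn)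
        = (TensorProduct.map (JD t) LinearMap.id ∘ₗ LinearMap.lTensor Hm G)
            ∘ₗ leg12 G Hn := by simp only [LinearMap.comp_assoc]
      _ = LinearMap.lTensor Hm G ∘ₗ (TensorProduct.map (JD t) LinearMap.id ∘ₗ leg12 G Hn)
          := by rw [s6]; simp only [LinearMap.comp_assoc]
      _ = (LinearMap.lTensor Hm G ∘ₗ leg12 G Hn)
            ∘ₗ TensorProduct.map (h t) (TensorProduct.map (k t) LinearMap.id) := by
          rw [s7]; simp only [LinearMap.comp_assoc]
      _ = (leg12 What Hn ∘ₗ leg13 G Hm ∘ₗ LinearMap.lTensor Hn G)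
            ∘ₗ TensorProduct.map (h t) (TensorProduct.map (k t) LinearMap.id) := by
          rw [← hmixedpent]
      _ = leg12 What Hn ∘ₗ leg13 G Hm
            ∘ₗ TensorProduct.map (h t) (G ∘ₗ TensorProduct.map (k t) LinearMap.id) := by
          simp only [LinearMap.comp_assoc]
          congr 2
          simp only [lTensor_eq_map, ← TensorProduct.map_comp,
            LinearMap.id_comp, LinearMap.comp_id]
  have EqBig : leg12 What Hn ∘ₗ leg13 G Hm
        ∘ₗ TensorProduct.map (h t) (TensorProduct.map (D t) (k t) ∘ₗ G)
      = leg12 What Hn ∘ₗ leg13 G Hm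
        ∘ₗ TensorProduct.map (h t) (G ∘ₗ TensorProduct.map (k t) LinearMap.id) := by
    rw [← M1, ← M2, hmixedpent]
  have c1 : leg12 Whatstar Hn ∘ₗ leg12 What Hn = LinearMap.id := by
    rw [leg12_comp, hW2, leg12_id]
  have c2 : leg13 Gstar Hm ∘ₗ leg13 G Hm = LinearMap.id := by
    rw [leg13_comp, hG2, leg13_id]
  have e1 : leg13 G Hm ∘ₗ TensorProduct.map (h t) (TensorProduct.map (D t) (k t) ∘ₗ G)
      = leg13 G Hm ∘ₗ TensorProduct.map (h t) (G ∘ₗ TensorProduct.map (k t) LinearMap.id) := by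
    have e := congrArg (fun F => leg12 Whatstar Hn ∘ₗ F) EqBig
    simpa only [← LinearMap.comp_assoc, c1, LinearMap.id_comp] using e
  have Eq1 : TensorProduct.map (h t) (TensorProduct.map (D t) (k t) ∘ₗ G)
      = TensorProduct.map (h t) (G ∘ₗ TensorProduct.map (k t) LinearMap.id) := by
    have e := congrArg (fun F => leg13 Gstar Hm ∘ₗ F) e1
    simpa only [← LinearMap.comp_assoc, c2, LinearMap.id_comp] using e
  -- conclude
  calc LinearMap.lTensor Hn G ∘ₗ leg12 (TensorProduct.map (h t) (k t)) Hn
        ∘ₗ LinearMap.lTensor Hn Gstar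
      = TensorProduct.map LinearMap.id G
          ∘ₗ TensorProduct.map (h t) (TensorProduct.map (k t) LinearMap.id)
          ∘ₗ TensorProduct.map LinearMap.id Gstar := by
        simp only [lTensor_eq_map, leg12_map]
    _ = TensorProduct.map (h t) (G ∘ₗ TensorProduct.map (k t) LinearMap.id)
          ∘ₗ TensorProduct.map LinearMap.id Gstar := by
        simp only [← LinearMap.comp_assoc, ← TensorProduct.map_comp,
          LinearMap.id_comp, LinearMap.comp_id]
    _ = TensorProduct.map (h t) (TensorProduct.map (D t) (k t) ∘ₗ G)
          ∘ₗ TensorProduct.map LinearMap.id Gstar := by rw [← Eq1]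
    _ = TensorProduct.map (h t) (TensorProduct.map (D t) (k t)) := by
        rw [← TensorProduct.map_comp, LinearMap.comp_assoc, hG1, LinearMap.comp_id,
          LinearMap.comp_id]

end
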